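/- arXiv:2605.07842 — 3 statements merged into one kernel-verified Lean document; each statement's English description precedes it below -/
import Mathlib

section
/- Let β, σ > 0, let c ∈ ℓ^∞(ℤ) be a complex sequence, and for x ∈ ℝ and ℓ ∈ ℤ define r_ℓ := ∑_{n ∈ ℤ} c_n · conj(c_{n+ℓ}) · e^{−(x−βn)²/(4σ²)} · e^{−(x−β(n+ℓ))²/(4σ²)}. Then the series converges absolutely and |r_ℓ| ≤ ‖c‖_∞² · (1 + σ√(2π)/β) · e^{−β²ℓ²/(8σ²)}. -/
open MeasureTheory Real Finset

lemma gauss_sum_finset_le (a t : ℝ) (ha : 0 < a) (s : Finset ℤ) :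
    ∑ n ∈ s, Real.exp (-a * ((n : ℝ) - t) ^ 2) ≤ 1 + Real.sqrt (π / a) := by
  set f : ℤ → ℝ := fun n => Real.exp (-a * ((n : ℝ) - t) ^ 2) with hf
  set n₀ : ℤ := round t with hn₀
  have hround : |t - (n₀ : ℝ)| ≤ 1 / 2 := abs_sub_round t
  have hr1 : (n₀ : ℝ) - t ≤ 1 / 2 := by
    have := abs_le.1 hround; linarith [this.1]
  have hr2 : t - (n₀ : ℝ) ≤ 1 / 2 := (abs_le.1 hround).2
  have hfnn : ∀ n, 0 ≤ f n := fun n => (Real.exp_pos _).le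
  have h1 : ∑ n ∈ s, f n ≤ f n₀ + ∑ n ∈ s.erase n₀, f n := by
    by_cases h : n₀ ∈ s
    · rw [Finset.add_sum_erase s f h]
    · rw [Finset.erase_eq_of_notMem h]
      nlinarith [hfnn n₀]
  have hfn₀ : f n₀ ≤ 1 := by
    rw [hf]
    have h0 : -a * ((n₀ : ℝ) - t) ^ 2 ≤ 0 := by nlinarith [sq_nonneg ((n₀:ℝ) - t)]
    calc Real.exp (-a * ((n₀ : ℝ) - t) ^ 2) ≤ Real.exp 0 := Real.exp_le_exp.2 h0
    _ = 1 := Real.exp_zero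
  set g : ℝ → ℝ := fun y => Real.exp (-a * (y - t) ^ 2) with hg
  have hgint : Integrable g := by
    have := (integrable_exp_neg_mul_sq ha).comp_sub_right t
    simpa [hg] using this
  have hgnn : ∀ y, 0 ≤ g y := fun y => (Real.exp_pos _).le
  set l : ℤ → ℤ := fun n => if n₀ < n then n - 1 else n with hl
  set I : ℤ → Set ℝ := fun n => Set.Ioc ((l n : ℝ)) ((l n : ℝ) + 1) with hI
  have key : ∀ n ∈ s.erase n₀, f n ≤ ∫ y in I n, g y := by
    intro n hn
    have hne : n ≠ n₀ := Finset.ne_of_mem_erase hn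
    have hpt : ∀ y ∈ I n, f n ≤ g y := by
      intro y hy
      rw [hf, hg]
      apply Real.exp_le_exp.2
      have hy' : (l n : ℝ) < y ∧ y ≤ (l n : ℝ) + 1 := by
        simpa [hI, Set.mem_Ioc] using hy
      have hsq : (y - t) ^ 2 ≤ ((n : ℝ) - t) ^ 2 := by
        rcases lt_or_gt_of_ne hne with h | h
        · have hln : l n = n := by simp only [hl]; simp [not_lt.2 h.le]
          rw [hln] at hy'
          have h1 : (n : ℝ) ≤ (n₀ : ℝ) - 1 := by exact_mod_cast Int.le_sub_one_of_lt h
          nlinarith [hy'.1, hy'.2]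
        · have hln : l n = n - 1 := by simp only [hl]; simp [h]
          rw [hln] at hy'
          have h1 : (n₀ : ℝ) + 1 ≤ (n : ℝ) := by exact_mod_cast Int.add_one_le_of_lt h
          have hy1 : (n : ℝ) - 1 < y := by
            have := hy'.1; push_cast at this; linarith
          have hy2 : y ≤ (n : ℝ) := by
            have := hy'.2; push_cast at this; linarith
          nlinarith
      nlinarith
    have heq : f n = ∫ _ in I n, f n := by
      rw [setIntegral_const, hI]
      simp [Real.volume_real_Ioc]
    rw [heq]
    apply setIntegral_mono_on ?_ hgint.integrableOn measurableSet_Ioc hpt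
    exact integrableOn_const (by simp [Real.volume_Ioc])
  have hdisj : (↑(s.erase n₀) : Set ℤ).Pairwise (Function.onFun Disjoint I) := by
    intro n hn m hm hnm
    simp only [Finset.coe_erase, Set.mem_diff, Finset.mem_coe, Set.mem_singleton_iff] at hn hm
    have hlm : l n + 1 ≤ l m ∨ l m + 1 ≤ l n := by
      have h1 : n ≠ n₀ := hn.2
      have h2 : m ≠ n₀ := hm.2
      simp only [hl]
      split_ifs <;> omega
    have : Disjoint (I n) (I m) := by
      rw [hI]; simp only
      rw [Set.Ioc_disjoint_Ioc]
      rcases hlm with h | h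
      · have h' : (l n : ℝ) + 1 ≤ (l m : ℝ) := by exact_mod_cast h
        exact le_trans (min_le_left _ _) (le_trans h' (le_max_right _ _))
      · have h' : (l m : ℝ) + 1 ≤ (l n : ℝ) := by exact_mod_cast h
        exact le_trans (min_le_right _ _) (le_trans h' (le_max_left _ _))
    exact this
  have h2 : ∑ n ∈ s.erase n₀, f n ≤ Real.sqrt (π / a) := by
    calc ∑ n ∈ s.erase n₀, f n ≤ ∑ n ∈ s.erase n₀, ∫ y in I n, g y :=
          Finset.sum_le_sum key
    _ = ∫ y in ⋃ n ∈ s.erase n₀, I n, g y := by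
        rw [integral_biUnion_finset _ (fun i _ => measurableSet_Ioc) hdisj
          (fun i _ => hgint.integrableOn)]
    _ ≤ ∫ y, g y := setIntegral_le_integral hgint (Filter.Eventually.of_forall hgnn)
    _ = ∫ y, Real.exp (-a * y ^ 2) := by
        rw [hg]
        exact integral_sub_right_eq_self (fun y => Real.exp (-a * y ^ 2)) t
    _ = Real.sqrt (π / a) := integral_gaussian a
  linarith

lemma gauss_summable (a t : ℝ) (ha : 0 < a) :
    Summable (fun n : ℤ => Real.exp (-a * ((n : ℝ) - t) ^ 2)) :=
  summable_of_sum_le (fun n => (Real.exp_pos _).le) (gauss_sum_finset_le a t ha)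

lemma gauss_tsum_le (a t : ℝ) (ha : 0 < a) :
    ∑' n : ℤ, Real.exp (-a * ((n : ℝ) - t) ^ 2) ≤ 1 + Real.sqrt (π / a) :=
  Summable.tsum_le_of_sum_le (gauss_summable a t ha) (gauss_sum_finset_le a t ha)

theorem autocorrelation_coeff_bound (β σ x : ℝ) (hβ : 0 < β) (hσ : 0 < σ)
    (c : ℤ → ℂ) (M : ℝ) (hM : ∀ n : ℤ, ‖c n‖ ≤ M) (ℓ : ℤ) :
    Summable (fun n : ℤ => ‖c n * (starRingEnd ℂ) (c (n + ℓ)) *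
        (Real.exp (-((x - β * (n : ℝ)) ^ 2 / (4 * σ ^ 2))) : ℝ) *
        (Real.exp (-((x - β * ((n : ℝ) + (ℓ : ℝ))) ^ 2 / (4 * σ ^ 2))) : ℝ)‖) ∧
    ‖∑' n : ℤ, c n * (starRingEnd ℂ) (c (n + ℓ)) *
        (Real.exp (-((x - β * (n : ℝ)) ^ 2 / (4 * σ ^ 2))) : ℝ) *
        (Real.exp (-((x - β * ((n : ℝ) + (ℓ : ℝ))) ^ 2 / (4 * σ ^ 2))) : ℝ)‖ ≤
      M ^ 2 * (1 + σ * Real.sqrt (2 * Real.pi) / β) *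
        Real.exp (-(β ^ 2 * (ℓ : ℝ) ^ 2 / (8 * σ ^ 2))) := by
  have hM0 : 0 ≤ M := le_trans (norm_nonneg _) (hM 0)
  set a : ℝ := β ^ 2 / (2 * σ ^ 2) with hadef
  have ha : 0 < a := by positivity
  set t : ℝ := (x - β * (ℓ : ℝ) / 2) / β with htdef
  set E : ℝ := Real.exp (-(β ^ 2 * (ℓ : ℝ) ^ 2 / (8 * σ ^ 2))) with hEdef
  -- pointwise identity for exponentials
  have hexp : ∀ n : ℤ,
      Real.exp (-((x - β * (n : ℝ)) ^ 2 / (4 * σ ^ 2))) *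
        Real.exp (-((x - β * ((n : ℝ) + (ℓ : ℝ))) ^ 2 / (4 * σ ^ 2))) =
      E * Real.exp (-a * ((n : ℝ) - t) ^ 2) := by
    intro n
    rw [← Real.exp_add, hEdef, ← Real.exp_add]
    congr 1
    rw [hadef, htdef]
    field_simp
    ring
  set F : ℤ → ℂ := fun n => c n * (starRingEnd ℂ) (c (n + ℓ)) *
        (Real.exp (-((x - β * (n : ℝ)) ^ 2 / (4 * σ ^ 2))) : ℝ) *
        (Real.exp (-((x - β * ((n : ℝ) + (ℓ : ℝ))) ^ 2 / (4 * σ ^ 2))) : ℝ) with hFdef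
  set B : ℤ → ℝ := fun n => M ^ 2 * E * Real.exp (-a * ((n : ℝ) - t) ^ 2) with hBdef
  have habs : ∀ n : ℤ, ‖F n‖ ≤ B n := by
    intro n
    rw [hFdef, hBdef]
    simp only [norm_mul, Complex.norm_real, Real.norm_eq_abs, Complex.norm_conj,
      Real.abs_exp]
    have h1 := hM n
    have h2 := hM (n + ℓ)
    have e1 : (0:ℝ) < Real.exp (-((x - β * (n : ℝ)) ^ 2 / (4 * σ ^ 2))) := Real.exp_pos _
    have e2 : (0:ℝ) < Real.exp (-((x - β * ((n : ℝ) + (ℓ : ℝ))) ^ 2 / (4 * σ ^ 2))) :=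
      Real.exp_pos _
    have hab : ‖c n‖ * ‖c (n + ℓ)‖ ≤ M * M :=
      mul_le_mul h1 h2 (norm_nonneg _) hM0
    calc ‖c n‖ * ‖c (n + ℓ)‖ *
          Real.exp (-((x - β * (n : ℝ)) ^ 2 / (4 * σ ^ 2))) *
          Real.exp (-((x - β * ((n : ℝ) + (ℓ : ℝ))) ^ 2 / (4 * σ ^ 2)))
        = (‖c n‖ * ‖c (n + ℓ)‖) *
          (Real.exp (-((x - β * (n : ℝ)) ^ 2 / (4 * σ ^ 2))) *
          Real.exp (-((x - β * ((n : ℝ) + (ℓ : ℝ))) ^ 2 / (4 * σ ^ 2)))) := by ring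
      _ ≤ M * M * (Real.exp (-((x - β * (n : ℝ)) ^ 2 / (4 * σ ^ 2))) *
          Real.exp (-((x - β * ((n : ℝ) + (ℓ : ℝ))) ^ 2 / (4 * σ ^ 2)))) :=
          mul_le_mul_of_nonneg_right hab (by positivity)
      _ = M ^ 2 * E * Real.exp (-a * ((n : ℝ) - t) ^ 2) := by rw [hexp n]; ring
  have hBsum : Summable B := ((gauss_summable a t ha).mul_left (M ^ 2 * E))
  have hsum : Summable (fun n : ℤ => ‖F n‖) :=
    hBsum.of_nonneg_of_le (fun n => norm_nonneg _) habs
  refine ⟨hsum, ?_⟩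
  have hsum' : Summable (fun n : ℤ => ‖F n‖) := by
    exact hsum
  have hnorm : ‖∑' n : ℤ, F n‖ ≤ ∑' n : ℤ, ‖F n‖ := by
    exact norm_tsum_le_tsum_norm hsum'
  have htsum : ∑' n : ℤ, ‖F n‖ ≤ ∑' n, B n :=
    Summable.tsum_le_tsum habs hsum hBsum
  have hBtsum : ∑' n, B n ≤ M ^ 2 * E * (1 + Real.sqrt (π / a)) := by
    rw [hBdef, tsum_mul_left]
    have := gauss_tsum_le a t ha
    have hnn : (0:ℝ) ≤ M ^ 2 * E := by positivity
    exact mul_le_mul_of_nonneg_left this hnn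
  have hsqrt : Real.sqrt (π / a) = σ * Real.sqrt (2 * π) / β := by
    have h1 : π / a = (2 * π) * (σ / β) ^ 2 := by
      rw [hadef]; field_simp
    rw [h1, Real.sqrt_mul (by positivity), Real.sqrt_sq (by positivity)]
    field_simp
  calc ‖∑' n : ℤ, F n‖ ≤ M ^ 2 * E * (1 + Real.sqrt (π / a)) :=
        le_trans hnorm (le_trans htsum hBtsum)
    _ = M ^ 2 * (1 + σ * Real.sqrt (2 * π) / β) * E := by rw [hsqrt]; ring
end

section
/- Let f, g : ℝ → ℂ, p ∈ ℝ with f(p) ≠ 0 and g(p) ≠ 0, and suppose ||f(p)|² − |g(p)|²| ≤ B and, for all ξ with |ξ| ≤ r, |f(p+ξ)·conj(f(p)) − g(p+ξ)·conj(g(p))| ≤ B' . Then with τ := conj(g(p))·|f(p)| / (|g(p)|·conj(f(p))) ∈ 𝕋, for every |ξ| ≤ r one has |f(p+ξ) − τ·g(p+ξ)| ≤ (1/|g(p)|)·( B·|f(p+ξ)|/(|f(p)| + |g(p)|) + B' ). -/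
theorem local_stability_core (f g : ℝ → ℂ) (p r B B' : ℝ) (hr : 0 < r)
    (hB : 0 ≤ B) (hB' : 0 ≤ B') (hf : f p ≠ 0) (hg : g p ≠ 0)
    (h1 : |‖f p‖ ^ 2 - ‖g p‖ ^ 2| ≤ B)
    (h2 : ∀ ξ : ℝ, |ξ| ≤ r →
      ‖f (p + ξ) * (starRingEnd ℂ) (f p) - g (p + ξ) * (starRingEnd ℂ) (g p)‖ ≤ B') :
    ∀ ξ : ℝ, |ξ| ≤ r →
      ‖f (p + ξ) -
          ((starRingEnd ℂ) (g p) * (‖f p‖ : ℂ) /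
            ((‖g p‖ : ℂ) * (starRingEnd ℂ) (f p))) * g (p + ξ)‖ ≤
        (1 / ‖g p‖) *
          (B * ‖f (p + ξ)‖ / (‖f p‖ + ‖g p‖) + B') := by
  intro ξ hξ
  set a := f p with ha'
  set b := g p with hb'
  set F := f (p + ξ) with hF'
  set G := g (p + ξ) with hG'
  have ha : (0:ℝ) < ‖a‖ := norm_pos_iff.mpr hf
  have hb : (0:ℝ) < ‖b‖ := norm_pos_iff.mpr hg
  have hca : (starRingEnd ℂ) a ≠ 0 := by simpa using hf
  have haC : ((‖a‖ : ℝ) : ℂ) ≠ 0 := by exact_mod_cast ha.ne'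
  have hbC : ((‖b‖ : ℝ) : ℂ) ≠ 0 := by exact_mod_cast hb.ne'
  have key : F - ((starRingEnd ℂ) b * (‖a‖ : ℂ) /
        ((‖b‖ : ℂ) * (starRingEnd ℂ) a)) * G
      = ((‖a‖ : ℂ) * (F * (starRingEnd ℂ) a - G * (starRingEnd ℂ) b)
          + F * (starRingEnd ℂ) a * ((‖b‖ : ℂ) - (‖a‖ : ℂ)))
        / ((‖b‖ : ℂ) * (starRingEnd ℂ) a) := by
    field_simp
    ring
  rw [key, norm_div]
  have hden : ‖(‖b‖ : ℂ) * (starRingEnd ℂ) a‖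
      = ‖b‖ * ‖a‖ := by
    simp [norm_mul, Complex.norm_real, abs_of_pos hb, Complex.norm_conj]
  rw [hden]
  have hnum : ‖(‖a‖ : ℂ) * (F * (starRingEnd ℂ) a - G * (starRingEnd ℂ) b)
          + F * (starRingEnd ℂ) a * ((‖b‖ : ℂ) - (‖a‖ : ℂ))‖
      ≤ ‖a‖ * B' + ‖F‖ * ‖a‖ * (B / (‖a‖ + ‖b‖)) := by
    have hd : |‖b‖ - ‖a‖| ≤ B / (‖a‖ + ‖b‖) := by
      rw [le_div_iff₀ (by positivity)]
      have : |‖b‖ - ‖a‖| * (‖a‖ + ‖b‖)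
          = |‖a‖ ^ 2 - ‖b‖ ^ 2| := by
        rw [← abs_of_pos (show (0:ℝ) < ‖a‖ + ‖b‖ by positivity), ← abs_mul]
        rw [abs_sub_comm]
        ring_nf
      rw [this]
      exact h1
    calc ‖(‖a‖ : ℂ) * (F * (starRingEnd ℂ) a - G * (starRingEnd ℂ) b)
          + F * (starRingEnd ℂ) a * ((‖b‖ : ℂ) - (‖a‖ : ℂ))‖
        ≤ ‖(‖a‖ : ℂ) * (F * (starRingEnd ℂ) a - G * (starRingEnd ℂ) b)‖
          + ‖F * (starRingEnd ℂ) a * ((‖b‖ : ℂ) - (‖a‖ : ℂ))‖ :=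
          norm_add_le _ _
      _ = ‖a‖ * ‖F * (starRingEnd ℂ) a - G * (starRingEnd ℂ) b‖
          + ‖F‖ * ‖a‖ * |‖b‖ - ‖a‖| := by
          rw [norm_mul, norm_mul, norm_mul, Complex.norm_real, Complex.norm_conj,
            ← Complex.ofReal_sub, Complex.norm_real, Real.norm_eq_abs, Real.norm_eq_abs, abs_of_pos ha]
      _ ≤ ‖a‖ * B' + ‖F‖ * ‖a‖ * (B / (‖a‖ + ‖b‖)) := by
          gcongr
          · exact h2 ξ hξ
  calc ‖_‖ / (‖b‖ * ‖a‖)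
      ≤ (‖a‖ * B' + ‖F‖ * ‖a‖ * (B / (‖a‖ + ‖b‖)))
          / (‖b‖ * ‖a‖) := by
        gcongr
    _ = (1 / ‖b‖) * (B * ‖F‖ / (‖a‖ + ‖b‖) + B') := by
        field_simp
        ring
end

section
/- Fix c ∈ (0,1). The Jacobi theta function ϑ₃(z, c) = ∑_{n∈ℤ} c^{n²} e^{2niz} restricted to real z is π-periodic, real-valued, and satisfies 0 < ϑ₃(π/2, c) ≤ ϑ₃(z, c) ≤ ϑ₃(0, c) for all z ∈ ℝ. -/
set_option maxHeartbeats 1000000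

open Real

noncomputable section

namespace Jacobi

def term (q z : ℝ) (n : ℤ) : ℂ := (q : ℂ) ^ (n ^ 2) * Complex.exp (2 * (n : ℂ) * Complex.I * (z : ℂ))

def F (q z : ℝ) : ℂ := ∑' n : ℤ, term q z n

def Θ (q z : ℝ) : ℝ := ∑' n : ℤ, q ^ (n ^ 2) * Real.cos (2 * (n : ℝ) * z)

lemma term_exp {q : ℝ} (hq : 0 < q) (z : ℝ) (n : ℤ) :
    term q z n = Complex.exp ((n : ℂ) ^ 2 * (Real.log q : ℂ) + 2 * (n : ℂ) * Complex.I * (z : ℂ)) := by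
  rw [Complex.exp_add, term]
  congr 1
  have h1 : (q : ℂ) = Complex.exp ((Real.log q : ℂ)) := by
    rw [← Complex.ofReal_exp, Real.exp_log hq]
  rw [h1, ← Complex.exp_int_mul]
  congr 1
  push_cast
  ring

lemma norm_term {q : ℝ} (hq : 0 < q) (z : ℝ) (n : ℤ) : ‖term q z n‖ = q ^ (n ^ 2) := by
  rw [term, norm_mul, norm_zpow]
  have h : (2 * (n : ℂ) * Complex.I * (z : ℂ)).re = 0 := by simp
  rw [Complex.norm_exp, h, Real.exp_zero, mul_one,
    Complex.norm_real, Real.norm_eq_abs, abs_of_pos hq]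

lemma zpow_nat_sq (q : ℝ) (n : ℕ) : q ^ ((n : ℤ) ^ 2) = q ^ (n ^ 2) := by
  rw [show ((n : ℤ) ^ 2) = ((n ^ 2 : ℕ) : ℤ) by push_cast; ring, zpow_natCast]

lemma summable_nat_sq {q : ℝ} (hq0 : 0 ≤ q) (hq1 : q < 1) (k : ℕ) :
    Summable (fun n : ℕ => q ^ ((n + k) ^ 2)) := by
  refine Summable.of_nonneg_of_le (fun n => pow_nonneg hq0 _) (fun n => ?_)
    (summable_geometric_of_lt_one hq0 hq1)
  refine _root_.pow_le_pow_of_le_one hq0 hq1.le ?_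
  calc n ≤ n + k := Nat.le_add_right n k
  _ ≤ (n + k) ^ 2 := Nat.le_self_pow (by norm_num) _

lemma summable_aux {q : ℝ} (hq0 : 0 < q) (hq1 : q < 1) (c : ℤ → ℝ) (C : ℝ)
    (hc : ∀ n, |c n| ≤ C) : Summable (fun n : ℤ => q ^ (n ^ 2) * c n) := by
  have hqn : ∀ n : ℤ, (0:ℝ) ≤ q ^ (n ^ 2) := fun n => (zpow_pos hq0 _).le
  apply Summable.of_abs
  have hbase : Summable (fun n : ℤ => q ^ (n ^ 2) * C) := by
    apply Summable.mul_right
    apply Summable.of_nat_of_neg_add_one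
    · refine (summable_nat_sq hq0.le hq1 0).congr (fun n => ?_)
      rw [← zpow_nat_sq]
      norm_num
    · refine (summable_nat_sq hq0.le hq1 1).congr (fun n => ?_)
      rw [← zpow_nat_sq]
      congr 1
  refine Summable.of_nonneg_of_le (fun n => abs_nonneg _) (fun n => ?_) hbase
  rw [abs_mul, abs_of_nonneg (hqn n)]
  exact mul_le_mul_of_nonneg_left (hc n) (hqn n)

lemma summable_A {q : ℝ} (hq0 : 0 < q) (hq1 : q < 1) (z : ℝ) :
    Summable (fun n : ℤ => q ^ (n ^ 2) * Real.cos (2 * (n : ℝ) * z)) :=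
  summable_aux hq0 hq1 _ 1 (fun n => Real.abs_cos_le_one _)

lemma summable_qsq {q : ℝ} (hq0 : 0 < q) (hq1 : q < 1) :
    Summable (fun n : ℤ => q ^ (n ^ 2)) := by
  simpa using summable_aux hq0 hq1 (fun _ => 1) 1 (by norm_num)

lemma term_decomp (q z : ℝ) (n : ℤ) :
    term q z n = ((q ^ (n ^ 2) * Real.cos (2 * (n : ℝ) * z) : ℝ) : ℂ)
      + ((q ^ (n ^ 2) * Real.sin (2 * (n : ℝ) * z) : ℝ) : ℂ) * Complex.I := by
  rw [term, show (2 * (n : ℂ) * Complex.I * (z : ℂ)) = ((2 * (n : ℝ) * z : ℝ) : ℂ) * Complex.I by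
    push_cast; ring, Complex.exp_mul_I]
  push_cast [Complex.ofReal_zpow]
  ring

lemma F_eq {q : ℝ} (hq0 : 0 < q) (hq1 : q < 1) (z : ℝ) : F q z = ((Θ q z : ℝ) : ℂ) := by
  have hA := summable_A hq0 hq1 z
  have hB : Summable (fun n : ℤ => q ^ (n ^ 2) * Real.sin (2 * (n : ℝ) * z)) :=
    summable_aux hq0 hq1 _ 1 (fun n => Real.abs_sin_le_one _)
  have hB0 : ∑' n : ℤ, q ^ (n ^ 2) * Real.sin (2 * (n : ℝ) * z) = 0 := by
    set B : ℤ → ℝ := fun n => q ^ (n ^ 2) * Real.sin (2 * (n : ℝ) * z) with hBdef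
    have h1 : ∀ n : ℤ, B (-n) = - B n := by
      intro n
      simp only [hBdef]
      rw [show ((-n : ℤ) ^ 2) = (n ^ 2) by ring]
      push_cast
      rw [show (2 * (-(n : ℝ)) * z) = -(2 * (n : ℝ) * z) by ring, Real.sin_neg]
      ring
    have h2 := (Equiv.neg ℤ).tsum_eq B
    simp only [Equiv.neg_apply] at h2
    rw [tsum_congr h1, tsum_neg] at h2
    linarith
  calc F q z = ∑' n : ℤ, (((q ^ (n ^ 2) * Real.cos (2 * (n : ℝ) * z) : ℝ) : ℂ)
      + ((q ^ (n ^ 2) * Real.sin (2 * (n : ℝ) * z) : ℝ) : ℂ) * Complex.I) :=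
        tsum_congr (term_decomp q z)
  _ = (∑' n : ℤ, ((q ^ (n ^ 2) * Real.cos (2 * (n : ℝ) * z) : ℝ) : ℂ))
      + (∑' n : ℤ, ((q ^ (n ^ 2) * Real.sin (2 * (n : ℝ) * z) : ℝ) : ℂ)) * Complex.I := by
        rw [Summable.tsum_add (Complex.summable_ofReal.2 hA)
          ((Complex.summable_ofReal.2 hB).mul_right _), tsum_mul_right]
  _ = ((Θ q z : ℝ) : ℂ) := by
        rw [← Complex.ofReal_tsum, ← Complex.ofReal_tsum, hB0]
        simp [Θ]

lemma F_periodic (q : ℝ) (z : ℝ) : F q (z + π) = F q z := by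
  refine tsum_congr (fun n => ?_)
  unfold term
  congr 1
  rw [show (2 * (n : ℂ) * Complex.I * ((z + π : ℝ) : ℂ))
    = 2 * (n : ℂ) * Complex.I * (z : ℂ) + (n : ℂ) * (2 * (π : ℂ) * Complex.I) by push_cast; ring,
    Complex.exp_add, Complex.exp_int_mul_two_pi_mul_I, mul_one]

lemma theta_le_theta_zero {q : ℝ} (hq0 : 0 < q) (hq1 : q < 1) (z : ℝ) : Θ q z ≤ Θ q 0 := by
  refine Summable.tsum_le_tsum (fun n => ?_) (summable_A hq0 hq1 z) (summable_A hq0 hq1 0)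
  have h1 : Real.cos (2 * (n : ℝ) * 0) = 1 := by norm_num
  rw [h1, mul_one]
  calc q ^ (n^2) * Real.cos (2 * (n:ℝ) * z) ≤ q ^ (n^2) * 1 :=
    mul_le_mul_of_nonneg_left (Real.cos_le_one _) (zpow_pos hq0 _).le
  _ = q ^ (n^2) := mul_one _

lemma one_le_theta_zero {q : ℝ} (hq0 : 0 < q) (hq1 : q < 1) : 1 ≤ Θ q 0 := by
  have := Summable.le_tsum (summable_A hq0 hq1 0) 0 (fun j _ => by
    have : Real.cos (2 * (j : ℝ) * 0) = 1 := by norm_num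
    rw [this, mul_one]
    exact (zpow_pos hq0 _).le)
  simp only [Int.cast_zero, mul_zero, zero_mul, Real.cos_zero, mul_one,
    pow_zero, zpow_zero, one_mul] at this
  calc (1:ℝ) ≤ ∑' n : ℤ, q ^ (n ^ 2) := this
  _ = Θ q 0 := by
    refine (tsum_congr (fun n => ?_)).symm
    norm_num

lemma theta_continuous {q : ℝ} (hq0 : 0 < q) (hq1 : q < 1) : Continuous (Θ q) := by
  refine continuous_tsum (fun n => ?_) (summable_qsq hq0 hq1) (fun n z => ?_)
  · exact continuous_const.mul (Real.continuous_cos.comp (by continuity))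
  · rw [Real.norm_eq_abs, abs_mul, abs_of_nonneg (zpow_pos hq0 _).le]
    calc q ^ (n^2) * |Real.cos (2 * (n:ℝ) * z)| ≤ q ^ (n^2) * 1 :=
      mul_le_mul_of_nonneg_left (Real.abs_cos_le_one _) (zpow_pos hq0 _).le
    _ = q ^ (n^2) := mul_one _

def S : Set (ℤ × ℤ) := {p | Even (p.1 + p.2)}

def eEven : ℤ × ℤ ≃ S :=
  Equiv.ofBijective (fun ab => ⟨(ab.1 + ab.2, ab.1 - ab.2), ⟨ab.1, by ring⟩⟩) (by
    constructor
    · rintro ⟨a, b⟩ ⟨c, d⟩ h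
      simp only [Subtype.mk.injEq, Prod.mk.injEq, Subtype.ext_iff] at h
      obtain ⟨h1, h2⟩ := h
      have : a = c ∧ b = d := by omega
      exact Prod.ext this.1 this.2
    · rintro ⟨⟨m, n⟩, ⟨r, hr⟩⟩
      simp only [Set.mem_setOf_eq] at hr
      refine ⟨(r, m - r), ?_⟩
      simp only [Subtype.mk.injEq, Prod.mk.injEq, Subtype.ext_iff]
      constructor <;> omega)

def eOdd : ℤ × ℤ ≃ ↥(Sᶜ) :=
  Equiv.ofBijective (fun ab => ⟨(ab.1 + ab.2 + 1, ab.1 - ab.2), by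
    simp only [Set.mem_compl_iff, S, Set.mem_setOf_eq]
    rintro ⟨r, hr⟩
    omega⟩) (by
    constructor
    · rintro ⟨a, b⟩ ⟨c, d⟩ h
      simp only [Subtype.mk.injEq, Prod.mk.injEq] at h
      obtain ⟨h1, h2⟩ := h
      have : a = c ∧ b = d := by omega
      exact Prod.ext this.1 this.2
    · rintro ⟨⟨m, n⟩, hmn⟩
      simp only [Set.mem_compl_iff, S, Set.mem_setOf_eq] at hmn
      rw [Int.not_even_iff_odd] at hmn
      obtain ⟨r, hr⟩ := hmn
      refine ⟨(r, m - r - 1), ?_⟩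
      simp only [Subtype.mk.injEq, Prod.mk.injEq]
      constructor <;> omega)

lemma exp_eq_exp_aux (w₁ w₂ : ℂ) (k : ℤ) (h : w₁ = w₂ + (k : ℂ) * (2 * (π : ℂ) * Complex.I)) :
    Complex.exp w₁ = Complex.exp w₂ := by
  rw [h, Complex.exp_add, Complex.exp_int_mul_two_pi_mul_I, mul_one]

lemma exp_eq_neg_exp_aux (w₁ w₂ : ℂ) (k : ℤ)
    (h : w₁ = w₂ + (k : ℂ) * (2 * (π : ℂ) * Complex.I) + (π : ℂ) * Complex.I) :
    Complex.exp w₁ = - Complex.exp w₂ := by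
  rw [h, Complex.exp_add, Complex.exp_add, Complex.exp_int_mul_two_pi_mul_I,
    Complex.exp_pi_mul_I]
  ring

lemma key {q : ℝ} (hq0 : 0 < q) (hq1 : q < 1) (x : ℝ) :
    F q x * F q (x + π / 2) = F (q ^ 2) (2 * x + π / 2) * F (q ^ 2) (π / 2) := by
  have hq20 : (0 : ℝ) < q ^ 2 := by positivity
  have hq21 : q ^ 2 < 1 := by nlinarith
  have hN : ∀ w : ℝ, Summable (fun n : ℤ => ‖term q w n‖) := by
    intro w
    refine (summable_qsq hq0 hq1).congr (fun n => ?_)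
    rw [norm_term hq0]
  have hN2 : ∀ w : ℝ, Summable (fun n : ℤ => ‖term (q ^ 2) w n‖) := by
    intro w
    refine (summable_qsq hq20 hq21).congr (fun n => ?_)
    rw [norm_term hq20]
  have hprod : Summable (fun p : ℤ × ℤ => term q x p.1 * term q (x + π / 2) p.2) :=
    summable_mul_of_summable_norm (hN x) (hN _)
  have hsplit := Summable.tsum_add_tsum_compl (s := S) (hprod.subtype S) (hprod.subtype Sᶜ)
  rw [F, F, tsum_mul_tsum_of_summable_norm (hN x) (hN _), ← hsplit]
  have hleft : (∑' p : S, term q x (p : ℤ × ℤ).1 * term q (x + π / 2) (p : ℤ × ℤ).2)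
      = F (q ^ 2) (2 * x + π / 2) * F (q ^ 2) (π / 2) := by
    rw [← eEven.tsum_eq]
    rw [F, F, tsum_mul_tsum_of_summable_norm (hN2 (2 * x + π / 2)) (hN2 (π / 2))]
    refine tsum_congr (fun ab => ?_)
    obtain ⟨a, b⟩ := ab
    show term q x (a + b) * term q (x + π / 2) (a - b)
      = term (q ^ 2) (2 * x + π / 2) a * term (q ^ 2) (π / 2) b
    rw [term_exp hq0, term_exp hq0, term_exp hq20, term_exp hq20,
      ← Complex.exp_add, ← Complex.exp_add]
    refine exp_eq_exp_aux _ _ (-b) ?_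
    push_cast [Real.log_pow]
    ring
  have hright : (∑' p : ↥(Sᶜ), term q x (p : ℤ × ℤ).1 * term q (x + π / 2) (p : ℤ × ℤ).2)
      = 0 := by
    rw [← eOdd.tsum_eq]
    set t : ℤ × ℤ → ℂ := fun ab =>
      term q x ((eOdd ab : ℤ × ℤ)).1 * term q (x + π / 2) ((eOdd ab : ℤ × ℤ)).2 with ht
    have hco : ∀ ab : ℤ × ℤ, (eOdd ab : ℤ × ℤ) = (ab.1 + ab.2 + 1, ab.1 - ab.2) := fun ab => rfl
    set σ : ℤ × ℤ ≃ ℤ × ℤ := (Equiv.refl ℤ).prodCongr (Equiv.subLeft (-1)) with hσ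
    have hσap : ∀ ab : ℤ × ℤ, σ ab = (ab.1, -1 - ab.2) := fun ab => rfl
    have hneg : ∀ ab : ℤ × ℤ, t (σ ab) = - t ab := by
      rintro ⟨a, b⟩
      simp only [ht, hσap, hco]
      rw [term_exp hq0, term_exp hq0, term_exp hq0, term_exp hq0,
        ← Complex.exp_add, ← Complex.exp_add]
      refine exp_eq_neg_exp_aux _ _ b ?_
      push_cast
      ring
    have h2 := σ.tsum_eq t
    rw [tsum_congr hneg, tsum_neg] at h2
    have h3 : (2 : ℂ) * (∑' ab, t ab) = 0 := by linear_combination - h2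
    have := mul_eq_zero.mp h3
    simpa using this
  rw [hleft, hright, add_zero]

lemma key_real {q : ℝ} (hq0 : 0 < q) (hq1 : q < 1) (x : ℝ) :
    Θ q x * Θ q (x + π / 2) = Θ (q ^ 2) (2 * x + π / 2) * Θ (q ^ 2) (π / 2) := by
  have hq20 : (0 : ℝ) < q ^ 2 := by positivity
  have hq21 : q ^ 2 < 1 := by nlinarith
  have h := key hq0 hq1 x
  rw [F_eq hq0 hq1, F_eq hq0 hq1, F_eq hq20 hq21, F_eq hq20 hq21] at h
  exact_mod_cast h

lemma sin_bound (m : ℕ) (x : ℝ) : |Real.sin (m * x)| ≤ m * |Real.sin x| := by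
  induction m with
  | zero => simp
  | succ m ih =>
    have h : ((m + 1 : ℕ) : ℝ) * x = (m : ℝ) * x + x := by push_cast; ring
    rw [h, Real.sin_add]
    calc |Real.sin ((m:ℝ)*x) * Real.cos x + Real.cos ((m:ℝ)*x) * Real.sin x|
        ≤ |Real.sin ((m:ℝ)*x) * Real.cos x| + |Real.cos ((m:ℝ)*x) * Real.sin x| := abs_add_le _ _
      _ ≤ |Real.sin ((m:ℝ)*x)| * 1 + 1 * |Real.sin x| := by
          rw [abs_mul, abs_mul]
          gcongr
          · exact Real.abs_cos_le_one x
          · exact Real.abs_cos_le_one _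
      _ ≤ (m : ℝ) * |Real.sin x| + 1 * |Real.sin x| := by
          rw [mul_one]
          gcongr
      _ = ((m + 1 : ℕ) : ℝ) * |Real.sin x| := by push_cast; ring

lemma four_pow_bound (n : ℕ) : ((n : ℝ) + 2) ^ 2 ≤ 4 ^ (n + 1) := by
  induction n with
  | zero => norm_num
  | succ n ih =>
    have h4 : (4:ℝ) ^ (n + 1 + 1) = 4 * 4 ^ (n + 1) := by ring
    rw [h4]
    push_cast
    push_cast at ih
    nlinarith [ih, sq_nonneg ((n:ℝ)), (Nat.cast_nonneg n : (0:ℝ) ≤ (n:ℝ))]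

lemma int_tsum_split (f : ℤ → ℝ) (hf : Summable f) :
    ∑' n : ℤ, f n = f 0 + (∑' n : ℕ, f ((n : ℤ) + 1)) + ∑' n : ℕ, f (-((n : ℤ) + 1)) := by
  have h1 : Summable (fun n : ℕ => f ((n : ℤ))) :=
    hf.comp_injective (fun a b h => by exact_mod_cast h)
  have h2 : Summable (fun n : ℕ => f (-((n : ℤ) + 1))) :=
    hf.comp_injective (fun a b h => by omega)
  rw [tsum_of_nat_of_neg_add_one h1 h2, Summable.tsum_eq_zero_add h1]
  have : ∀ n : ℕ, f (((n + 1 : ℕ) : ℤ)) = f ((n : ℤ) + 1) := fun n => congrArg f (by push_cast; ring)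
  rw [tsum_congr this]
  norm_num

lemma zpow_int_sq_eq {q : ℝ} (n : ℕ) : q ^ (((n : ℤ) + 1) ^ 2) = q ^ ((n + 1) ^ 2) := by
  rw [show ((n : ℤ) + 1) ^ 2 = (((n + 1 : ℕ) : ℤ)) ^ 2 by push_cast; ring, zpow_nat_sq]

lemma zpow_int_sq_eq_neg {q : ℝ} (n : ℕ) : q ^ ((-((n : ℤ) + 1)) ^ 2) = q ^ ((n + 1) ^ 2) := by
  rw [show (-((n : ℤ) + 1)) ^ 2 = (((n + 1 : ℕ) : ℤ)) ^ 2 by push_cast; ring, zpow_nat_sq]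

lemma tail_abs_le {q : ℝ} (hq0 : 0 < q) (hq1 : q < 1) (c : ℕ → ℝ) (hc : ∀ n, |c n| ≤ 1)
    (hsum : Summable (fun n : ℕ => q ^ ((n + 1) ^ 2) * c n)) :
    |∑' n : ℕ, q ^ ((n + 1) ^ 2) * c n| ≤ q / (1 - q) := by
  have hgeom : Summable (fun n : ℕ => q ^ (n + 1)) := by
    refine Summable.of_nonneg_of_le (fun n => pow_nonneg hq0.le _) (fun n => ?_)
      (summable_geometric_of_lt_one hq0.le hq1)
    exact _root_.pow_le_pow_of_le_one hq0.le hq1.le (Nat.le_succ n)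
  have habs : Summable (fun n : ℕ => ‖q ^ ((n + 1) ^ 2) * c n‖) := by
    simpa only [Real.norm_eq_abs] using hsum.abs
  calc |∑' n : ℕ, q ^ ((n + 1) ^ 2) * c n| ≤ ∑' n : ℕ, |q ^ ((n + 1) ^ 2) * c n| := by
        have := norm_tsum_le_tsum_norm habs
        simpa only [Real.norm_eq_abs] using this
    _ ≤ ∑' n : ℕ, q ^ (n + 1) := by
        refine Summable.tsum_le_tsum (fun n => ?_) hsum.abs hgeom
        rw [abs_mul, abs_of_nonneg (pow_nonneg hq0.le _)]
        calc q ^ ((n + 1) ^ 2) * |c n| ≤ q ^ ((n + 1) ^ 2) * 1 :=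
            mul_le_mul_of_nonneg_left (hc n) (pow_nonneg hq0.le _)
          _ = q ^ ((n + 1) ^ 2) := mul_one _
          _ ≤ q ^ (n + 1) := _root_.pow_le_pow_of_le_one hq0.le hq1.le
              (Nat.le_self_pow (by norm_num) _)
    _ = q / (1 - q) := by
        have : ∀ n : ℕ, q ^ (n + 1) = q ^ n * q := fun n => pow_succ q n
        rw [tsum_congr this, tsum_mul_right, tsum_geometric_of_lt_one hq0.le hq1]
        rw [div_eq_mul_inv, mul_comm]


lemma base_pos {q : ℝ} (hq0 : 0 < q) (hq8 : q ≤ 1 / 8) : 0 < Θ q (π / 2) := by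
  have hq1 : q < 1 := lt_of_le_of_lt hq8 (by norm_num)
  set g : ℤ → ℝ := fun n => q ^ (n ^ 2) * Real.cos (2 * (n : ℝ) * (π / 2)) with hg
  have hgsum : Summable g := summable_A hq0 hq1 (π / 2)
  have hsplit := int_tsum_split g hgsum
  have hg0 : g 0 = 1 := by simp [hg]
  have hT1 : |∑' n : ℕ, g ((n : ℤ) + 1)| ≤ q / (1 - q) := by
    have he : ∀ n : ℕ, g ((n : ℤ) + 1)
        = q ^ ((n + 1) ^ 2) * Real.cos (2 * ((n : ℝ) + 1) * (π / 2)) := by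
      intro n
      simp only [hg]
      rw [zpow_int_sq_eq]
      push_cast
      ring_nf
    rw [tsum_congr he]
    exact tail_abs_le hq0 hq1 _ (fun n => Real.abs_cos_le_one _)
      ((hgsum.comp_injective (fun a b h => by omega)).congr (fun n => he n))
  have hT2 : |∑' n : ℕ, g (-((n : ℤ) + 1))| ≤ q / (1 - q) := by
    have he : ∀ n : ℕ, g (-((n : ℤ) + 1))
        = q ^ ((n + 1) ^ 2) * Real.cos (2 * (-((n : ℝ) + 1)) * (π / 2)) := by
      intro n
      simp only [hg]
      rw [zpow_int_sq_eq_neg]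
      push_cast
      ring_nf
    rw [tsum_congr he]
    exact tail_abs_le hq0 hq1 _ (fun n => Real.abs_cos_le_one _)
      ((hgsum.comp_injective (fun a b h => by omega)).congr (fun n => he n))
  have hqd : q / (1 - q) ≤ 1 / 7 := by
    rw [div_le_div_iff₀ (by linarith) (by norm_num)]
    linarith
  have : Θ q (π / 2) = g 0 + (∑' n : ℕ, g ((n : ℤ) + 1)) + ∑' n : ℕ, g (-((n : ℤ) + 1)) := hsplit
  rw [this, hg0]
  have h1 := abs_le.mp hT1
  have h2 := abs_le.mp hT2
  linarith [h1.1, h2.1, hqd]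

lemma base_min {q : ℝ} (hq0 : 0 < q) (hq8 : q ≤ 1 / 8) (z : ℝ) : Θ q (π / 2) ≤ Θ q z := by
  have hq1 : q < 1 := lt_of_le_of_lt hq8 (by norm_num)
  set ε : ℝ := z - π / 2 with hε
  set d : ℤ → ℝ := fun n => -2 * q ^ (n ^ 2) * Real.cos ((n : ℝ) * π) * Real.sin ((n : ℝ) * ε) ^ 2
    with hd
  have hdsum : Summable d := by
    refine (summable_aux hq0 hq1
      (fun n => -2 * Real.cos ((n : ℝ) * π) * Real.sin ((n : ℝ) * ε) ^ 2) 2 (fun n => ?_)).congr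
      (fun n => by simp only [hd]; ring)
    rw [abs_mul, abs_mul]
    have h1 : |(-2 : ℝ)| = 2 := by norm_num
    have h2 : |Real.cos ((n : ℝ) * π)| ≤ 1 := Real.abs_cos_le_one _
    have h3 : |Real.sin ((n : ℝ) * ε) ^ 2| ≤ 1 := by
      rw [abs_of_nonneg (sq_nonneg _), ← one_pow 2]
      apply sq_le_sq'
      · linarith [Real.neg_one_le_sin ((n : ℝ) * ε)]
      · exact Real.sin_le_one _
    rw [h1]
    nlinarith [abs_nonneg (Real.cos ((n : ℝ) * π)), abs_nonneg (Real.sin ((n : ℝ) * ε) ^ 2)]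
  -- difference formula
  have hdiff : Θ q z = Θ q (π / 2) + ∑' n : ℤ, d n := by
    have hsub := Summable.tsum_sub (summable_A hq0 hq1 z) (summable_A hq0 hq1 (π / 2))
    have hterm : ∀ n : ℤ, q ^ (n ^ 2) * Real.cos (2 * (n : ℝ) * z)
        - q ^ (n ^ 2) * Real.cos (2 * (n : ℝ) * (π / 2)) = d n := by
      intro n
      have ha : 2 * (n : ℝ) * z = (n : ℝ) * π + 2 * ((n : ℝ) * ε) := by rw [hε]; ring
      have hb : 2 * (n : ℝ) * (π / 2) = (n : ℝ) * π := by ring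
      rw [ha, hb, Real.cos_add, Real.sin_int_mul_pi, Real.cos_two_mul]
      have hpyth := Real.sin_sq_add_cos_sq ((n : ℝ) * ε)
      simp only [hd]
      linear_combination 2 * q ^ (n ^ 2) * Real.cos ((n : ℝ) * π) * hpyth
    rw [tsum_congr hterm] at hsub
    have : Θ q z - Θ q (π / 2) = ∑' n : ℤ, d n := hsub.symm
    linarith [this]
  -- nonnegativity of the correction sum
  have hmain : 0 ≤ ∑' n : ℤ, d n := by
    have hsplit := int_tsum_split d hdsum
    have hd0 : d 0 = 0 := by simp [hd]
    have heven : ∀ n : ℕ, d (-((n : ℤ) + 1)) = d ((n : ℤ) + 1) := by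
      intro n
      simp only [hd]
      rw [zpow_int_sq_eq_neg, zpow_int_sq_eq]
      push_cast
      rw [show (-((n : ℝ) + 1) * π) = -(((n : ℝ) + 1) * π) by ring, Real.cos_neg,
        show (-((n : ℝ) + 1) * ε) = -(((n : ℝ) + 1) * ε) by ring, Real.sin_neg]
      ring
    have hshift : Summable (fun n : ℕ => d ((n : ℤ) + 1)) :=
      hdsum.comp_injective (fun a b h => by omega)
    have hs2 : Summable (fun n : ℕ => d ((n : ℤ) + 1 + 1)) :=
      hdsum.comp_injective (fun a b h => by omega)
    have hzero_add := Summable.tsum_eq_zero_add hshift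
    -- d 1 = 2 q sin^2 ε
    have hd1 : d ((0 : ℤ) + 1) = 2 * q * Real.sin ε ^ 2 := by
      simp only [hd]
      norm_num
    -- tail bound
    have hgeom : Summable (fun n : ℕ => -(8 * q ^ 4 * Real.sin ε ^ 2) * (4 * q ^ 2) ^ n) := by
      apply Summable.mul_left
      refine summable_geometric_of_lt_one (by positivity) (by nlinarith)
    have htail_ge : -(8 * q ^ 4 * Real.sin ε ^ 2) * (1 - 4 * q ^ 2)⁻¹
        ≤ ∑' n : ℕ, d (((n + 1 : ℕ) : ℤ) + 1) := by
      have hterm_ge : ∀ n : ℕ, -(8 * q ^ 4 * Real.sin ε ^ 2) * (4 * q ^ 2) ^ n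
          ≤ d (((n + 1 : ℕ) : ℤ) + 1) := by
        intro n
        have hrw : d (((n + 1 : ℕ) : ℤ) + 1)
            = -2 * q ^ ((n + 2) ^ 2) * Real.cos (((n : ℝ) + 2) * π) * Real.sin (((n : ℝ) + 2) * ε) ^ 2 := by
          simp only [hd]
          rw [show (((n + 1 : ℕ) : ℤ) + 1) = (((n + 2 : ℕ) : ℤ)) by push_cast; ring, zpow_nat_sq]
          push_cast
          ring_nf
        rw [hrw]
        have hQ : (0 : ℝ) ≤ q ^ ((n + 2) ^ 2) := pow_nonneg hq0.le _
        have hsin2 : Real.sin (((n : ℝ) + 2) * ε) ^ 2 ≤ ((n : ℝ) + 2) ^ 2 * Real.sin ε ^ 2 := by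
          have h := sin_bound (n + 2) ε
          push_cast at h
          have h2 : |Real.sin (((n : ℝ) + 2) * ε)| ^ 2 ≤ (((n : ℝ) + 2) * |Real.sin ε|) ^ 2 := by
            apply pow_le_pow_left₀ (abs_nonneg _) h
          rw [sq_abs] at h2
          calc Real.sin (((n : ℝ) + 2) * ε) ^ 2 ≤ (((n : ℝ) + 2) * |Real.sin ε|) ^ 2 := h2
            _ = ((n : ℝ) + 2) ^ 2 * Real.sin ε ^ 2 := by rw [mul_pow, sq_abs]
        have hqpow : q ^ ((n + 2) ^ 2) ≤ q ^ (2 * n + 4) :=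
          _root_.pow_le_pow_of_le_one hq0.le hq1.le (by nlinarith)
        have hstep1 : -2 * q ^ ((n + 2) ^ 2) * Real.cos (((n : ℝ) + 2) * π) * Real.sin (((n : ℝ) + 2) * ε) ^ 2
            ≥ -2 * q ^ ((n + 2) ^ 2) * Real.sin (((n : ℝ) + 2) * ε) ^ 2 := by
          have hfac : -2 * q ^ ((n + 2) ^ 2) * Real.sin (((n : ℝ) + 2) * ε) ^ 2 ≤ 0 := by
            nlinarith [hQ, sq_nonneg (Real.sin (((n : ℝ) + 2) * ε))]
          have := mul_le_mul_of_nonpos_left (Real.cos_le_one (((n : ℝ) + 2) * π)) hfac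
          nlinarith [this]
        have hstep2 : -2 * q ^ ((n + 2) ^ 2) * Real.sin (((n : ℝ) + 2) * ε) ^ 2
            ≥ -2 * q ^ (2 * n + 4) * (((n : ℝ) + 2) ^ 2 * Real.sin ε ^ 2) := by
          nlinarith [hsin2, hqpow, hQ, sq_nonneg (Real.sin ε), sq_nonneg ((n : ℝ) + 2),
            pow_nonneg hq0.le (2 * n + 4), sq_nonneg (Real.sin (((n : ℝ) + 2) * ε))]
        have hstep3 : -2 * q ^ (2 * n + 4) * (((n : ℝ) + 2) ^ 2 * Real.sin ε ^ 2)
            ≥ -(8 * q ^ 4 * Real.sin ε ^ 2) * (4 * q ^ 2) ^ n := by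
          have h4 := four_pow_bound n
          have hpow_id : q ^ (2 * n + 4) * (4 : ℝ) ^ (n + 1) = 4 * q ^ 4 * (4 * q ^ 2) ^ n := by
            rw [mul_pow, pow_add, pow_mul]
            ring
          nlinarith [h4, sq_nonneg (Real.sin ε), pow_nonneg hq0.le (2 * n + 4),
            pow_nonneg (by positivity : (0:ℝ) ≤ 4 * q ^ 2) n,
            mul_nonneg (pow_nonneg hq0.le (2 * n + 4)) (sq_nonneg (Real.sin ε)),
            mul_le_mul_of_nonneg_left h4 (mul_nonneg (pow_nonneg hq0.le (2 * n + 4)) (sq_nonneg (Real.sin ε)))]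
        linarith
      have hs3 : Summable (fun n : ℕ => d (((n + 1 : ℕ) : ℤ) + 1)) :=
        hdsum.comp_injective (fun a b h => by omega)
      have := Summable.tsum_le_tsum hterm_ge hgeom hs3
      calc -(8 * q ^ 4 * Real.sin ε ^ 2) * (1 - 4 * q ^ 2)⁻¹
          = ∑' n : ℕ, -(8 * q ^ 4 * Real.sin ε ^ 2) * (4 * q ^ 2) ^ n := by
            rw [tsum_mul_left, tsum_geometric_of_lt_one (by positivity) (by nlinarith)]
        _ ≤ ∑' n : ℕ, d (((n + 1 : ℕ) : ℤ) + 1) := this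
      done
    -- combine
    have hcast : ∀ n : ℕ, d (((n + 1 : ℕ) : ℤ) + 1) = d (((n : ℤ) + 1) + 1) :=
      fun n => congrArg d (by push_cast; ring)
    rw [tsum_congr hcast] at htail_ge
    have hinv : (1 - 4 * q ^ 2)⁻¹ ≤ 16 / 15 := by
      rw [inv_le_comm₀ (by nlinarith) (by norm_num)]
      nlinarith
    have hs : (0 : ℝ) ≤ Real.sin ε ^ 2 := sq_nonneg _
    have htail_ge' : -(8 * q ^ 4 * Real.sin ε ^ 2) * (16 / 15)
        ≤ ∑' n : ℕ, d (((n : ℤ) + 1) + 1) := by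
      refine le_trans ?_ htail_ge
      have h8 : (0 : ℝ) ≤ 8 * q ^ 4 * Real.sin ε ^ 2 := by positivity
      nlinarith [hinv, h8, inv_nonneg.mpr (by nlinarith : (0:ℝ) ≤ 1 - 4 * q ^ 2)]
    have hsum1 : ∑' n : ℕ, d ((n : ℤ) + 1)
        = d ((0 : ℤ) + 1) + ∑' n : ℕ, d (((n : ℤ) + 1) + 1) := by
      rw [hzero_add]
      refine congrArg₂ (· + ·) (by norm_num) (tsum_congr (fun n => congrArg d (by push_cast; ring)))
    have hfirst : 0 ≤ ∑' n : ℕ, d ((n : ℤ) + 1) := by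
      rw [hsum1, hd1]
      have hq3 : q ^ 3 ≤ 1 / 512 := by nlinarith [hq0.le, hq8]
      have h1 := mul_le_mul_of_nonneg_right hq3 (mul_nonneg hq0.le hs)
      have : -(8 * q ^ 4 * Real.sin ε ^ 2) * (16 / 15) ≥ -(2 * q * Real.sin ε ^ 2) := by
        nlinarith [h1, mul_nonneg hq0.le hs]
      linarith [htail_ge']
    have hT2eq : ∑' n : ℕ, d (-((n : ℤ) + 1)) = ∑' n : ℕ, d ((n : ℤ) + 1) := tsum_congr heven
    rw [hsplit, hd0, hT2eq]
    linarith [hfirst]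
  linarith [hdiff, hmain]

def Good (q : ℝ) : Prop := 0 < Θ q (π / 2) ∧ ∀ z, Θ q (π / 2) ≤ Θ q z

lemma step {q : ℝ} (hq0 : 0 < q) (hq1 : q < 1) (IH : Good (q ^ 2)) : Good q := by
  obtain ⟨hpos2, hmin2⟩ := IH
  have h00 : (0 : ℝ) < Θ q 0 := lt_of_lt_of_le one_pos (one_le_theta_zero hq0 hq1)
  have hkey0 := key_real hq0 hq1 0
  rw [zero_add, mul_zero, zero_add] at hkey0
  -- hkey0 : Θ q 0 * Θ q (π/2) = Θ (q^2) (π/2) * Θ (q^2) (π/2)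
  have hpos : 0 < Θ q (π / 2) := by nlinarith [hpos2, h00, hkey0]
  have hne : ∀ z, Θ q z ≠ 0 := by
    intro z h0
    have hk := key_real hq0 hq1 z
    rw [h0, zero_mul] at hk
    have h1 : 0 < Θ (q ^ 2) (2 * z + π / 2) := lt_of_lt_of_le hpos2 (hmin2 _)
    nlinarith [hpos2, h1]
  have hposall : ∀ z, 0 < Θ q z := by
    intro z
    rcases lt_or_gt_of_ne (hne z) with hlt | h
    · exfalso
      have hc : ContinuousOn (Θ q) (Set.uIcc z 0) := (theta_continuous hq0 hq1).continuousOn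
      have hiv := intermediate_value_uIcc hc
      have h0mem : (0 : ℝ) ∈ Set.uIcc (Θ q z) (Θ q 0) :=
        Set.mem_uIcc.2 (Or.inl ⟨hlt.le, h00.le⟩)
      obtain ⟨w, _, hw⟩ := hiv h0mem
      exact hne w hw
    · exact h
  refine ⟨hpos, fun z => ?_⟩
  have hk := key_real hq0 hq1 z
  have hge : Θ q 0 * Θ q (π / 2) ≤ Θ q z * Θ q (z + π / 2) := by
    rw [hk, hkey0]
    have := hmin2 (2 * z + π / 2)
    nlinarith [hpos2]
  have hle0 : Θ q (z + π / 2) ≤ Θ q 0 := theta_le_theta_zero hq0 hq1 _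
  have hp : 0 < Θ q (z + π / 2) := hposall _
  nlinarith [hge, hle0, hp, hpos, mul_le_mul_of_nonneg_right hle0 hpos.le]

lemma good_of_lt_one {q : ℝ} (hq0 : 0 < q) (hq1 : q < 1) : Good q := by
  obtain ⟨m, hm⟩ := exists_pow_lt_of_lt_one (show (0:ℝ) < 1/8 by norm_num) hq1
  have hkey : ∀ j : ℕ, Good (q ^ (2 ^ j)) → Good q := by
    intro j
    induction j with
    | zero => intro h; simpa using h
    | succ j ih =>
      intro h
      apply ih
      have hqj0 : 0 < q ^ (2 ^ j) := pow_pos hq0 _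
      have hqj1 : q ^ (2 ^ j) < 1 := pow_lt_one₀ hq0.le hq1 (by positivity)
      apply step hqj0 hqj1
      have : (q ^ (2 ^ j)) ^ 2 = q ^ (2 ^ (j + 1)) := by
        rw [← pow_mul, pow_succ]
      rwa [this]
  apply hkey m
  have hq8 : q ^ (2 ^ m) ≤ 1 / 8 := by
    have h1 : q ^ (2 ^ m) ≤ q ^ m :=
      _root_.pow_le_pow_of_le_one hq0.le hq1.le (Nat.le_of_lt (Nat.lt_two_pow_self (n := m)))
    linarith [hm, h1]
  exact ⟨base_pos (pow_pos hq0 _) hq8, base_min (pow_pos hq0 _) hq8⟩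

end Jacobi

theorem jacobi_theta_properties (c : ℝ) (hc : c ∈ Set.Ioo (0 : ℝ) 1) :
    let θ : ℝ → ℂ := fun z => ∑' n : ℤ, ((c : ℂ)) ^ (n ^ 2) * Complex.exp (2 * (n : ℂ) * Complex.I * (z : ℂ))
    (∀ z : ℝ, θ (z + Real.pi) = θ z) ∧
    (∀ z : ℝ, (θ z).im = 0) ∧
    (∀ z : ℝ, 0 < (θ (Real.pi / 2)).re ∧ (θ (Real.pi / 2)).re ≤ (θ z).re ∧ (θ z).re ≤ (θ 0).re) := by
  obtain ⟨hc0, hc1⟩ := hc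
  intro θ
  have hθ : ∀ z : ℝ, θ z = Jacobi.F c z := fun z => rfl
  have hFΘ : ∀ z : ℝ, θ z = ((Jacobi.Θ c z : ℝ) : ℂ) := fun z => by
    rw [hθ z, Jacobi.F_eq hc0 hc1]
  have hre : ∀ z : ℝ, (θ z).re = Jacobi.Θ c z := fun z => by
    rw [hFΘ z]; exact Complex.ofReal_re _
  refine ⟨fun z => ?_, fun z => ?_, fun z => ?_⟩
  · rw [hθ, hθ]
    exact Jacobi.F_periodic c z
  · rw [hFΘ z]
    exact Complex.ofReal_im _
  · obtain ⟨h1, h2⟩ := Jacobi.good_of_lt_one hc0 hc1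
    rw [hre, hre, hre]
    exact ⟨h1, h2 z, Jacobi.theta_le_theta_zero hc0 hc1 z⟩
end
end
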